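/- Let $K \in \mathbb{R}$, $n \ge 2$, and let $\alpha^2, \beta$ be as usual ($A$ positive definite, $b\ne0$, $b^2 = b^TA^{-1}b$). If there is a polynomial $P(y)$ such that $\alpha^2 \cdot P(y) = 18(n-1)K b^4 \beta(y)^9$ identically in $y$, then $K = 0$. -/

import Mathlib

open Matrix MvPolynomial

noncomputable def quadPoly {n : ℕ} (A : Matrix (Fin n) (Fin n) ℝ) : MvPolynomial (Fin n) ℝ :=
  ∑ i, ∑ j, C (A i j) * X i * X j

noncomputable def linPoly {n : ℕ} (b : Fin n → ℝ) : MvPolynomial (Fin n) ℝ :=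
  ∑ i, C (b i) * X i

/-- if `α² · P = 18(n-1)K b⁴ β⁹` identically (as polynomials),
with `n ≥ 2`, `A` positive definite, `b ≠ 0`, then `K = 0`. -/
theorem stmt8 {n : ℕ} (hn : 2 ≤ n) (K : ℝ) (A : Matrix (Fin n) (Fin n) ℝ)
    (hA : A.PosDef) (b : Fin n → ℝ) (hb : b ≠ 0) (b2 : ℝ)
    (hb2 : b2 = b ⬝ᵥ A⁻¹ *ᵥ b) (P : MvPolynomial (Fin n) ℝ)
    (h : quadPoly A * P = C (18 * ((n : ℝ) - 1) * K * b2 ^ 2) * (linPoly b) ^ 9) :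
    K = 0 := by
  classical
  by_contra hK
  have hb2pos : 0 < b2 := by
    have := hA.inv.dotProduct_mulVec_pos hb
    simpa [hb2] using this
  have hn1 : (1:ℝ) < (n:ℝ) := by exact_mod_cast Nat.lt_of_lt_of_le Nat.one_lt_two hn
  set c : ℝ := 18 * ((n : ℝ) - 1) * K * b2 ^ 2 with hc
  have hcne : c ≠ 0 := by
    apply mul_ne_zero (mul_ne_zero (mul_ne_zero (by norm_num) (by linarith)) hK)
    positivity
  obtain ⟨i0, hi0⟩ := Function.ne_iff.mp hb
  simp only [Pi.zero_apply] at hi0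
  have : Nontrivial (Fin n) := Fin.nontrivial_iff_two_le.mpr hn
  obtain ⟨j0, hj0⟩ := exists_ne i0
  set y0 : Fin n → ℝ := fun k => if k = i0 then b j0 else if k = j0 then -(b i0) else 0
    with hy0def
  have hy0 : y0 ≠ 0 := by
    intro h0
    have h1 := congrFun h0 j0
    rw [hy0def] at h1
    simp [hj0] at h1
    exact hi0 h1
  have hterm0 : ∀ k, b k * y0 k =
      (if k = i0 then b i0 * b j0 else 0) + (if k = j0 then -(b j0 * b i0) else 0) := by
    intro k
    have hij : i0 ≠ j0 := fun e => hj0 e.symm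
    rw [hy0def]
    by_cases h1 : k = i0 <;> by_cases h2 : k = j0
    · exact absurd (h2.symm.trans h1) hj0
    · simp [h1, h2, hij]
    · simp [h1, h2, hj0]
    · simp [h1, h2]
  have hby0 : ∑ k, b k * y0 k = 0 := by
    simp only [hterm0, Finset.sum_add_distrib, Finset.sum_ite_eq', Finset.mem_univ, if_true]
    ring
  have hQf : ∀ v : Fin n → ℝ, v ≠ 0 → 0 < ∑ i, ∑ j, A i j * v i * v j := by
    intro v hv
    have h1 := hA.dotProduct_mulVec_pos hv
    have e : star v ⬝ᵥ A *ᵥ v = ∑ i, ∑ j, A i j * v i * v j := by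
      simp only [star_trivial, dotProduct, mulVec, Finset.mul_sum]
      exact Finset.sum_congr rfl fun i _ => Finset.sum_congr rfl fun j _ => by ring
    linarith [e ▸ h1]
  set d0 : ℝ := ∑ i, ∑ j, A i j * y0 i * y0 j with hd0
  set d1 : ℝ := ∑ i, ∑ j, A i j * (y0 i * b j + b i * y0 j) with hd1
  set d2 : ℝ := ∑ i, ∑ j, A i j * b i * b j with hd2
  have hd0pos : 0 < d0 := hQf y0 hy0
  have hd2pos : 0 < d2 := hQf b hb
  set s : ℝ := ∑ k, b k * b k with hs
  have hspos : 0 < s := Finset.sum_pos' (fun k _ => mul_self_nonneg _)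
    ⟨i0, Finset.mem_univ _, mul_self_pos.mpr hi0⟩
  set σ : Fin n → Polynomial ℝ :=
    fun k => Polynomial.C (y0 k) + Polynomial.C (b k) * Polynomial.X with hσ
  have hlin : (aeval σ) (linPoly b) = Polynomial.C s * Polynomial.X := by
    rw [linPoly, map_sum]
    have e1 : ∀ k ∈ Finset.univ, (aeval σ) (C (b k) * X k)
        = Polynomial.C (b k * y0 k) + Polynomial.C (b k * b k) * Polynomial.X := by
      intro k _
      simp only [_root_.map_mul, aeval_C, aeval_X, hσ, Polynomial.algebraMap_eq,
        Polynomial.C_mul]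
      ring
    rw [Finset.sum_congr rfl e1, Finset.sum_add_distrib, ← Finset.sum_mul,
      ← map_sum Polynomial.C, ← map_sum Polynomial.C, hby0, map_zero, zero_add, ← hs]
  have hquad : (aeval σ) (quadPoly A) =
      Polynomial.C d0 + Polynomial.C d1 * Polynomial.X
        + Polynomial.C d2 * Polynomial.X ^ 2 := by
    rw [quadPoly, map_sum]
    have e1 : ∀ i ∈ Finset.univ, (aeval σ) (∑ j, C (A i j) * X i * X j)
        = ∑ j, (Polynomial.C (A i j * y0 i * y0 j)
          + Polynomial.C (A i j * (y0 i * b j + b i * y0 j)) * Polynomial.X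
          + Polynomial.C (A i j * b i * b j) * Polynomial.X ^ 2) := by
      intro i _
      rw [map_sum]
      refine Finset.sum_congr rfl fun j _ => ?_
      simp only [_root_.map_mul, aeval_C, aeval_X, hσ, Polynomial.algebraMap_eq,
        Polynomial.C_mul, Polynomial.C_add]
      ring
    rw [Finset.sum_congr rfl e1]
    have e0 : Polynomial.C d0 = ∑ i, ∑ j, Polynomial.C (A i j * y0 i * y0 j) := by
      rw [hd0, map_sum]
      exact Finset.sum_congr rfl fun i _ => map_sum _ _ _
    have e2 : Polynomial.C d1 = ∑ i, ∑ j, Polynomial.C (A i j * (y0 i * b j + b i * y0 j)) := by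
      rw [hd1, map_sum]
      exact Finset.sum_congr rfl fun i _ => map_sum _ _ _
    have e3 : Polynomial.C d2 = ∑ i, ∑ j, Polynomial.C (A i j * b i * b j) := by
      rw [hd2, map_sum]
      exact Finset.sum_congr rfl fun i _ => map_sum _ _ _
    rw [e0, e2, e3]
    simp only [Finset.sum_add_distrib, Finset.sum_mul]
  -- apply the substitution to the main identity
  have H := congrArg (aeval σ) h
  rw [_root_.map_mul, _root_.map_mul, map_pow, aeval_C, Polynomial.algebraMap_eq,
    hquad, hlin, mul_pow, ← Polynomial.C_pow, ← mul_assoc, ← Polynomial.C_mul] at H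
  -- pass to ℂ
  have H2 := congrArg (Polynomial.map (algebraMap ℝ ℂ)) H
  simp only [Polynomial.map_mul, Polynomial.map_add, Polynomial.map_pow,
    Polynomial.map_C, Polynomial.map_X] at H2
  set Q : Polynomial ℂ := Polynomial.C ((d0:ℂ)) + Polynomial.C ((d1:ℂ)) * Polynomial.X
      + Polynomial.C ((d2:ℂ)) * Polynomial.X ^ 2 with hQ
  have hQeq : (Polynomial.C (algebraMap ℝ ℂ d0) + Polynomial.C (algebraMap ℝ ℂ d1) * Polynomial.X
      + Polynomial.C (algebraMap ℝ ℂ d2) * Polynomial.X ^ 2) = Q := rfl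
  rw [hQeq] at H2
  have hcoeff2 : Q.coeff 2 = (d2:ℂ) := by
    rw [hQ]
    simp [Polynomial.coeff_C]
  have hcoeff2ne : Q.coeff 2 ≠ 0 := by
    rw [hcoeff2]
    exact_mod_cast Complex.ofReal_ne_zero.mpr (ne_of_gt hd2pos)
  have h2le : 2 ≤ Q.natDegree := Polynomial.le_natDegree_of_ne_zero hcoeff2ne
  have hdeg : 0 < Q.degree := Polynomial.natDegree_pos_iff_degree_pos.mp (by omega)
  obtain ⟨z, hz⟩ := Complex.exists_root hdeg
  have hev := congrArg (Polynomial.eval z) H2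
  rw [Polynomial.eval_mul, hz.eq_zero, zero_mul, Polynomial.eval_mul, Polynomial.eval_pow,
    Polynomial.eval_C, Polynomial.eval_X] at hev
  have hz0 : z = 0 := by
    have hcs : (algebraMap ℝ ℂ) (c * s ^ 9) ≠ 0 := by
      simp only [Complex.coe_algebraMap, Complex.ofReal_ne_zero]
      exact mul_ne_zero hcne (pow_ne_zero _ (ne_of_gt hspos))
    have h9 : z ^ 9 = 0 := by
      rcases mul_eq_zero.mp hev.symm with h' | h'
      · exact absurd h' hcs
      · exact h'
    exact pow_eq_zero_iff (by norm_num) |>.mp h9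
  have : Polynomial.eval 0 Q = 0 := hz0 ▸ hz.eq_zero
  rw [hQ] at this
  simp at this
  exact absurd this (ne_of_gt hd0pos)
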